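/- Let p be prime, P ∈ ℤ_p[x₁,...,xₙ] p-primitive, and e ≥ 1. Then x₀ ∈ ℤ_p^n satisfies P(x₀) ≡ 0 (mod p^e) if and only if there exists a vertex (r,k) of the trunk of P with x₀ ≡ r (mod p^k) and φ(r,k) ≥ e. Moreover, such a vertex is unique under the additional condition φ(r,k) - t_k < e ≤ φ(r,k), where t_k is the thickness at (r,k). -/

import Mathlib

open MvPolynomial

/-- `pShift p m r P` is the polynomial `P(r + pᵐ·x)`. -/
noncomputable def pShift (p : ℕ) [Fact p.Prime] {n : ℕ} (m : ℕ) (r : Fin n → ℤ_[p])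
    (P : MvPolynomial (Fin n) ℤ_[p]) : MvPolynomial (Fin n) ℤ_[p] :=
  bind₁ (fun i => C (r i) + C ((p : ℤ_[p]) ^ m) * X i) P

variable {p : ℕ} [Fact p.Prime] {n : ℕ}

lemma pShift_pShift (k m : ℕ) (r d : Fin n → ℤ_[p]) (P : MvPolynomial (Fin n) ℤ_[p]) :
    pShift p m d (pShift p k r P) = pShift p (k + m) (r + (p : ℤ_[p]) ^ k • d) P := by
  unfold pShift
  rw [bind₁_bind₁]
  have h : (fun i => (bind₁ fun j => C (d j) + C ((p : ℤ_[p]) ^ m) * X j)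
      (C (r i) + C ((p : ℤ_[p]) ^ k) * X i))
      = fun i => (C ((r + (p : ℤ_[p]) ^ k • d) i) + C ((p : ℤ_[p]) ^ (k + m)) * X i :
        MvPolynomial (Fin n) ℤ_[p]) := by
    funext i
    simp only [map_add, map_mul, bind₁_C_right, bind₁_X_right, Pi.add_apply, Pi.smul_apply,
    smul_eq_mul, pow_add]
    ring
  rw [h]

lemma pShift_zero_zero (P : MvPolynomial (Fin n) ℤ_[p]) : pShift p 0 (0 : Fin n → ℤ_[p]) P = P := by
  unfold pShift
  simp

lemma pShift_C_mul (m : ℕ) (r : Fin n → ℤ_[p]) (a : ℤ_[p]) (P : MvPolynomial (Fin n) ℤ_[p]) :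
    pShift p m r (C a * P) = C a * pShift p m r P := by
  unfold pShift; simp

lemma C_p_dvd_pShift_zero_iff (d : Fin n → ℤ_[p]) (F : MvPolynomial (Fin n) ℤ_[p]) :
    C (p : ℤ_[p]) ∣ pShift p 0 d F ↔ C (p : ℤ_[p]) ∣ F := by
  constructor
  · rintro ⟨M, hM⟩
    have h : F = pShift p 0 (-d) (pShift p 0 d F) := by
      rw [pShift_pShift]
      simp [pShift_zero_zero]
    rw [h, hM, pShift_C_mul]
    exact Dvd.intro _ rfl
  · rintro ⟨M, hM⟩
    rw [hM, pShift_C_mul]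
    exact Dvd.intro _ rfl

lemma bind₁_C_apply {R : Type*} [CommSemiring R] {σ : Type*} (a : σ → R)
    (Q : MvPolynomial σ R) :
    bind₁ (fun i => (C (a i) : MvPolynomial σ R)) Q = C (eval a Q) := by
  induction Q using MvPolynomial.induction_on with
  | C c => simp
  | add f g hf hg => simp [hf, hg]
  | mul_X f i hf => simp [hf]

lemma p_dvd_iff_toZMod_eq_zero (x : ℤ_[p]) : (p : ℤ_[p]) ∣ x ↔ PadicInt.toZMod x = 0 := by
  rw [← Ideal.mem_span_singleton, ← PadicInt.maximalIdeal_eq_span_p, ← PadicInt.ker_toZMod,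
    RingHom.mem_ker]

lemma C_p_dvd_pShift_one (rk : Fin n → ℤ_[p]) (Pk : MvPolynomial (Fin n) ℤ_[p])
    (h : (p : ℤ_[p]) ∣ eval rk Pk) : C (p : ℤ_[p]) ∣ pShift p 1 rk Pk := by
  have hmap : MvPolynomial.map (PadicInt.toZMod (p := p)) (pShift p 1 rk Pk) = 0 := by
    unfold pShift
    rw [map_bind₁]
    have h1 : (fun i => MvPolynomial.map (PadicInt.toZMod (p := p))
        (C (rk i) + C ((p : ℤ_[p]) ^ 1) * X i))
        = fun i => (C (PadicInt.toZMod (rk i)) : MvPolynomial (Fin n) (ZMod p)) := by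
      funext i
      have : PadicInt.toZMod ((p : ℤ_[p]) ^ 1) = 0 := by
        rw [← p_dvd_iff_toZMod_eq_zero]
        simp
      simp [this]
    rw [h1, bind₁_C_apply]
    have h2 : eval (fun i => PadicInt.toZMod (rk i))
        (MvPolynomial.map (PadicInt.toZMod (p := p)) Pk)
        = PadicInt.toZMod (eval rk Pk) := by
      rw [eval_map]
      have := eval₂_comp_left (PadicInt.toZMod (p := p)) (RingHom.id ℤ_[p]) rk Pk
      simp only [RingHom.comp_id] at this
      have hfun : (fun i => PadicInt.toZMod (rk i)) = ⇑(PadicInt.toZMod (p := p)) ∘ rk := rfl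
      rw [hfun, ← this, eval₂_id]
    rw [h2, (p_dvd_iff_toZMod_eq_zero _).mp h]
    simp
  rw [C_dvd_iff_dvd_coeff]
  intro m
  rw [p_dvd_iff_toZMod_eq_zero]
  have := congrArg (fun F => coeff m F) hmap
  simpa [coeff_map] using this

lemma step_t_pos {rk : Fin n → ℤ_[p]} {Pk Q : MvPolynomial (Fin n) ℤ_[p]} {t' : ℕ}
    (hdvd : (p : ℤ_[p]) ∣ eval rk Pk)
    (hshift : pShift p 1 rk Pk = C ((p : ℤ_[p]) ^ t') * Q)
    (hQ : ¬ C (p : ℤ_[p]) ∣ Q) : 1 ≤ t' := by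
  by_contra h
  push_neg at h
  interval_cases t'
  apply hQ
  have := C_p_dvd_pShift_one rk Pk hdvd
  rwa [hshift, pow_zero, map_one, one_mul] at this

lemma p_ne_zero' : (p : ℤ_[p]) ≠ 0 := (PadicInt.prime_p).ne_zero

lemma C_pow_p_ne_zero (a : ℕ) : (C ((p : ℤ_[p]) ^ a) : MvPolynomial (Fin n) ℤ_[p]) ≠ 0 := by
  simp only [ne_eq, C_eq_zero]
  exact pow_ne_zero _ p_ne_zero'

lemma exp_unique {a b : ℕ} {Q₁ Q₂ : MvPolynomial (Fin n) ℤ_[p]}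
    (h : C ((p : ℤ_[p]) ^ a) * Q₁ = C ((p : ℤ_[p]) ^ b) * Q₂)
    (h1 : ¬ C (p : ℤ_[p]) ∣ Q₁) (h2 : ¬ C (p : ℤ_[p]) ∣ Q₂) : a = b := by
  rcases lt_trichotomy a b with hab | hab | hab
  · exfalso
    apply h1
    have hb : (C ((p : ℤ_[p]) ^ b) : MvPolynomial (Fin n) ℤ_[p])
        = C ((p : ℤ_[p]) ^ a) * (C (p : ℤ_[p]) * C ((p : ℤ_[p]) ^ (b - a - 1))) := by
      rw [← map_mul, ← map_mul, ← pow_succ', ← pow_add]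
      congr 2
      omega
    rw [hb, mul_assoc] at h
    have := mul_left_cancel₀ (C_pow_p_ne_zero a) h
    exact ⟨_, by rw [this, mul_assoc]⟩
  · exact hab
  · exfalso
    apply h2
    have hb : (C ((p : ℤ_[p]) ^ a) : MvPolynomial (Fin n) ℤ_[p])
        = C ((p : ℤ_[p]) ^ b) * (C (p : ℤ_[p]) * C ((p : ℤ_[p]) ^ (a - b - 1))) := by
      rw [← map_mul, ← map_mul, ← pow_succ', ← pow_add]
      congr 2
      omega
    rw [hb, mul_assoc] at h
    have := mul_left_cancel₀ (C_pow_p_ne_zero b) h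
    exact ⟨_, by rw [← this, mul_assoc]⟩

lemma pShift_one_ne_zero {y : Fin n → ℤ_[p]} {Pk : MvPolynomial (Fin n) ℤ_[p]}
    (hPk : Pk ≠ 0) : pShift p 1 y Pk ≠ 0 := by
  intro h0
  apply hPk
  have hinj : Function.Injective (PadicInt.Coe.ringHom (p := p)) := Subtype.coe_injective
  apply MvPolynomial.map_injective _ hinj
  rw [map_zero]
  have hp0 : (p : ℚ_[p]) ≠ 0 := Nat.cast_ne_zero.mpr (Fact.out (p := p.Prime)).ne_zero
  have hmap : MvPolynomial.map (PadicInt.Coe.ringHom (p := p)) (pShift p 1 y Pk)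
      = bind₁ (fun i => (C ((y i : ℚ_[p])) + C ((p : ℚ_[p])) * X i : MvPolynomial (Fin n) ℚ_[p]))
        (MvPolynomial.map (PadicInt.Coe.ringHom (p := p)) Pk) := by
    unfold pShift
    rw [map_bind₁]
    have hfun : (fun i => MvPolynomial.map (PadicInt.Coe.ringHom (p := p))
        (C (y i) + C ((p : ℤ_[p]) ^ 1) * X i))
        = fun i => (C ((y i : ℚ_[p])) + C ((p : ℚ_[p])) * X i : MvPolynomial (Fin n) ℚ_[p]) := by
      funext i
      simp only [map_add, map_mul, map_C, map_X, pow_one]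
      rfl
    rw [hfun]
  have key : bind₁ (fun i => (C (-(y i : ℚ_[p]) / p) + C ((p : ℚ_[p]))⁻¹ * X i :
        MvPolynomial (Fin n) ℚ_[p]))
      (bind₁ (fun i => (C ((y i : ℚ_[p])) + C ((p : ℚ_[p])) * X i : MvPolynomial (Fin n) ℚ_[p]))
        (MvPolynomial.map (PadicInt.Coe.ringHom (p := p)) Pk))
      = MvPolynomial.map (PadicInt.Coe.ringHom (p := p)) Pk := by
    rw [bind₁_bind₁]
    have h : (fun i => (bind₁ fun j => (C (-(y j : ℚ_[p]) / p) + C ((p : ℚ_[p]))⁻¹ * X j :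
          MvPolynomial (Fin n) ℚ_[p]))
        (C ((y i : ℚ_[p])) + C ((p : ℚ_[p])) * X i))
        = fun i => (X i : MvPolynomial (Fin n) ℚ_[p]) := by
      funext i
      simp only [map_add, map_mul, bind₁_C_right, bind₁_X_right]
      have e1 : (p : ℚ_[p]) * (-(y i : ℚ_[p]) / p) = -(y i : ℚ_[p]) := by
        field_simp
      have e2 : (p : ℚ_[p]) * ((p : ℚ_[p]))⁻¹ = 1 := mul_inv_cancel₀ hp0
      rw [mul_add, ← mul_assoc, ← C_mul, ← C_mul, e1, e2, C_1, one_mul, ← add_assoc, ← C_add]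
      simp
    rw [h, bind₁_X_left]
    rfl
  rw [h0, map_zero] at hmap
  calc MvPolynomial.map (PadicInt.Coe.ringHom (p := p)) Pk
      = bind₁ (fun i => (C (-(y i : ℚ_[p]) / p) + C ((p : ℚ_[p]))⁻¹ * X i :
          MvPolynomial (Fin n) ℚ_[p]))
        (bind₁ (fun i => (C ((y i : ℚ_[p])) + C ((p : ℚ_[p])) * X i :
          MvPolynomial (Fin n) ℚ_[p]))
          (MvPolynomial.map (PadicInt.Coe.ringHom (p := p)) Pk)) := key.symm
    _ = 0 := by rw [← hmap]; simp

lemma exists_primitive_part {F : MvPolynomial (Fin n) ℤ_[p]} (hF : F ≠ 0) :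
    ∃ (t : ℕ) (Q : MvPolynomial (Fin n) ℤ_[p]),
      F = C ((p : ℤ_[p]) ^ t) * Q ∧ ¬ C (p : ℤ_[p]) ∣ Q := by
  classical
  obtain ⟨m, hm⟩ : ∃ m, coeff m F ≠ 0 := by
    by_contra h
    push_neg at h
    exact hF (MvPolynomial.ext _ _ (by simpa using h))
  obtain ⟨N, hbound⟩ : ∃ N : ℕ, ∀ s : ℕ, (p : ℤ_[p]) ^ s ∣ coeff m F → s ≤ N := by
    refine ⟨(coeff m F).valuation, ?_⟩
    intro s hs
    obtain ⟨d, hd⟩ := hs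
    have hnorm : ‖coeff m F‖ ≤ (p : ℝ) ^ (-(s : ℤ)) := by
      rw [hd]
      calc ‖(p : ℤ_[p]) ^ s * d‖ = ‖(p : ℤ_[p]) ^ s‖ * ‖d‖ := norm_mul _ _
        _ ≤ ‖(p : ℤ_[p]) ^ s‖ * 1 :=
            mul_le_mul_of_nonneg_left (PadicInt.norm_le_one d) (norm_nonneg _)
        _ = (p : ℝ) ^ (-(s : ℤ)) := by rw [mul_one, PadicInt.norm_p_pow]
    rw [PadicInt.norm_eq_zpow_neg_valuation hm] at hnorm
    have hp1 : (1 : ℝ) < (p : ℝ) := by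
      exact_mod_cast (Fact.out (p := p.Prime)).one_lt
    have := (zpow_le_zpow_iff_right₀ hp1).mp hnorm
    omega
  have h0 : (fun s => C ((p : ℤ_[p]) ^ s) ∣ F) 0 := by simp
  have htp : C ((p : ℤ_[p]) ^ (Nat.findGreatest (fun s => C ((p : ℤ_[p]) ^ s) ∣ F) N)) ∣ F :=
    Nat.findGreatest_spec (P := fun s => C ((p : ℤ_[p]) ^ s) ∣ F) (Nat.zero_le _) h0
  obtain ⟨Q, hQ⟩ := htp
  refine ⟨_, Q, hQ, ?_⟩
  rintro ⟨M, hM⟩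
  have hsucc : C ((p : ℤ_[p]) ^ (Nat.findGreatest (fun s => C ((p : ℤ_[p]) ^ s) ∣ F) N + 1)) ∣ F := by
    refine ⟨M, ?_⟩
    conv_lhs => rw [hQ, hM]
    rw [pow_succ, map_mul, mul_assoc]
  have hle : Nat.findGreatest (fun s => C ((p : ℤ_[p]) ^ s) ∣ F) N + 1 ≤ N :=
    hbound _ ((C_dvd_iff_dvd_coeff _ F).mp hsucc m)
  have := Nat.le_findGreatest (P := fun s => C ((p : ℤ_[p]) ^ s) ∣ F) hle hsucc
  omega

lemma eval_pShift (k : ℕ) (r y x : Fin n → ℤ_[p]) (P : MvPolynomial (Fin n) ℤ_[p])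
    (h : ∀ i, x i = r i + (p : ℤ_[p]) ^ k * y i) :
    eval y (pShift p k r P) = eval x P := by
  unfold pShift
  show eval₂Hom (RingHom.id ℤ_[p]) y _ = _
  rw [eval₂Hom_bind₁]
  have hfun : (fun i => eval₂Hom (RingHom.id ℤ_[p]) y
      (C (r i) + C ((p : ℤ_[p]) ^ k) * X i)) = x := by
    funext i
    simp [h i]
  rw [hfun]
  rfl

/-- `Trunk p P₀ r k φ t Pk` means `(r, k)` is a vertex of the trunk of `P₀`, with tree-top
value `φ` (the sum of the thicknesses along the path to the root), thickness `t` at this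
vertex (`0` at the root by convention), and attached polynomial `Pk`. -/
inductive Trunk (p : ℕ) [Fact p.Prime] {n : ℕ} (P₀ : MvPolynomial (Fin n) ℤ_[p]) :
    (Fin n → ℤ_[p]) → ℕ → ℕ → ℕ → MvPolynomial (Fin n) ℤ_[p] → Prop
  | root : Trunk p P₀ 0 0 0 0 P₀
  | step {r : Fin n → ℤ_[p]} {k φ t : ℕ} {Pk : MvPolynomial (Fin n) ℤ_[p]}
      (rk : Fin n → ℤ_[p]) (t' : ℕ) (Q : MvPolynomial (Fin n) ℤ_[p]) :
      Trunk p P₀ r k φ t Pk →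
      (p : ℤ_[p]) ∣ eval rk Pk →
      pShift p 1 rk Pk = C ((p : ℤ_[p]) ^ t') * Q →
      ¬ C (p : ℤ_[p]) ∣ Q →
      Trunk p P₀ (r + (p : ℤ_[p]) ^ k • rk) (k + 1) (φ + t') t' Q

lemma Trunk.invariant {P₀ : MvPolynomial (Fin n) ℤ_[p]} {r : Fin n → ℤ_[p]} {k φ t : ℕ}
    {Pk : MvPolynomial (Fin n) ℤ_[p]} (h : Trunk p P₀ r k φ t Pk) :
    pShift p k r P₀ = C ((p : ℤ_[p]) ^ φ) * Pk := by
  induction h with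
  | root => rw [pShift_zero_zero]; simp
  | step rk t' Q hT hdvd hshift hQ ih =>
    rw [← pShift_pShift, ih, pShift_C_mul, hshift, ← mul_assoc, ← map_mul, ← pow_add]

lemma Trunk.primitive {P₀ : MvPolynomial (Fin n) ℤ_[p]} (hprim : ¬ C (p : ℤ_[p]) ∣ P₀)
    {r : Fin n → ℤ_[p]} {k φ t : ℕ}
    {Pk : MvPolynomial (Fin n) ℤ_[p]} (h : Trunk p P₀ r k φ t Pk) :
    ¬ C (p : ℤ_[p]) ∣ Pk := by
  induction h with
  | root => exact hprim
  | step rk t' Q hT hdvd hshift hQ ih => exact hQ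

lemma Trunk.phi_eq {P₀ : MvPolynomial (Fin n) ℤ_[p]} (hprim : ¬ C (p : ℤ_[p]) ∣ P₀)
    {x₀ r r' : Fin n → ℤ_[p]} {k φ φ' t t' : ℕ}
    {Pk Pk' : MvPolynomial (Fin n) ℤ_[p]}
    (h : Trunk p P₀ r k φ t Pk) (h' : Trunk p P₀ r' k φ' t' Pk')
    (hc : ∀ i, (p : ℤ_[p]) ^ k ∣ x₀ i - r i) (hc' : ∀ i, (p : ℤ_[p]) ^ k ∣ x₀ i - r' i) :
    φ = φ' := by
  have hdvd : ∀ i, (p : ℤ_[p]) ^ k ∣ r' i - r i := by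
    intro i
    have := dvd_sub (hc i) (hc' i)
    simpa using this
  choose d hd using hdvd
  have hr' : r' = r + (p : ℤ_[p]) ^ k • d := by
    funext i
    have := hd i
    simp only [Pi.add_apply, Pi.smul_apply, smul_eq_mul]
    linear_combination this
  have h1 := h.invariant
  have h2 := h'.invariant
  have h3 := pShift_pShift (p := p) k 0 r d P₀
  simp only [add_zero] at h3
  rw [hr', ← h3, h1, pShift_C_mul] at h2
  refine exp_unique h2 ?_ (h'.primitive hprim)
  rw [C_p_dvd_pShift_zero_iff]
  exact h.primitive hprim

lemma Trunk.ancestor {P₀ : MvPolynomial (Fin n) ℤ_[p]} {x₀ r' : Fin n → ℤ_[p]} {k' φ' t' : ℕ}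
    {Pk' : MvPolynomial (Fin n) ℤ_[p]} (h : Trunk p P₀ r' k' φ' t' Pk')
    (hc : ∀ i, (p : ℤ_[p]) ^ k' ∣ x₀ i - r' i) :
    ∀ k < k', ∃ (r : Fin n → ℤ_[p]) (φ t : ℕ) (Pk : MvPolynomial (Fin n) ℤ_[p]),
      Trunk p P₀ r k φ t Pk ∧ (∀ i, (p : ℤ_[p]) ^ k ∣ x₀ i - r i) ∧ φ + t' ≤ φ' := by
  induction h with
  | root => intro k hk; omega
  | step rk s Q hT hdvd hshift hQ ih =>
    rename_i r k0 φ0 t0 Pk0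
    intro k hk
    have hcpred : ∀ i, (p : ℤ_[p]) ^ k0 ∣ x₀ i - r i := by
      intro i
      have h1 : (p : ℤ_[p]) ^ k0 ∣ x₀ i - (r + (p : ℤ_[p]) ^ k0 • rk) i := by
        have := hc i
        exact dvd_trans (pow_dvd_pow _ (Nat.le_succ k0)) this
      have h2 : x₀ i - r i = (x₀ i - (r + (p : ℤ_[p]) ^ k0 • rk) i) + (p : ℤ_[p]) ^ k0 * rk i := by
        simp only [Pi.add_apply, Pi.smul_apply, smul_eq_mul]
        ring
      rw [h2]
      exact dvd_add h1 (Dvd.intro _ rfl)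
    rcases Nat.lt_succ_iff_lt_or_eq.mp hk with hk' | hk'
    · obtain ⟨r₁, φ₁, t₁, Pk₁, hT₁, hc₁, hle₁⟩ := ih hcpred k hk'
      exact ⟨r₁, φ₁, t₁, Pk₁, hT₁, hc₁, by omega⟩
    · subst hk'
      exact ⟨r, φ0, t0, Pk0, hT, hcpred, le_refl _⟩

/-- `x₀ ∈ ℤ_pⁿ` satisfies `P(x₀) ≡ 0 (mod pᵉ)` iff there is a trunk vertex `(r,k)` with
`x₀ ≡ r (mod pᵏ)` and `φ(r,k) ≥ e`; moreover such a vertex is unique under the extra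
condition `φ(r,k) - t_k < e ≤ φ(r,k)`. -/
theorem trunk_to_tree (p : ℕ) [Fact p.Prime] {n : ℕ}
    (P : MvPolynomial (Fin n) ℤ_[p]) (hprim : ¬ C (p : ℤ_[p]) ∣ P)
    (e : ℕ) (he : 1 ≤ e) (x₀ : Fin n → ℤ_[p]) :
    ((p : ℤ_[p]) ^ e ∣ eval x₀ P ↔
      ∃ (r : Fin n → ℤ_[p]) (k φ t : ℕ) (Pk : MvPolynomial (Fin n) ℤ_[p]),
        Trunk p P r k φ t Pk ∧ (∀ i, (p : ℤ_[p]) ^ k ∣ x₀ i - r i) ∧ e ≤ φ) ∧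
    (∀ (r : Fin n → ℤ_[p]) (k φ t : ℕ) (Pk : MvPolynomial (Fin n) ℤ_[p])
        (r' : Fin n → ℤ_[p]) (k' φ' t' : ℕ) (Pk' : MvPolynomial (Fin n) ℤ_[p]),
      Trunk p P r k φ t Pk → Trunk p P r' k' φ' t' Pk' →
      (∀ i, (p : ℤ_[p]) ^ k ∣ x₀ i - r i) → (∀ i, (p : ℤ_[p]) ^ k' ∣ x₀ i - r' i) →
      φ - t < e → e ≤ φ → φ' - t' < e → e ≤ φ' →
      k = k' ∧ ∀ i, (p : ℤ_[p]) ^ k ∣ r i - r' i) := by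
  constructor
  · constructor
    · -- forward direction
      intro hdvd
      have key : ∀ d : ℕ, ∀ (r : Fin n → ℤ_[p]) (k φ t : ℕ) (Pk : MvPolynomial (Fin n) ℤ_[p]),
          Trunk p P r k φ t Pk → (∀ i, (p : ℤ_[p]) ^ k ∣ x₀ i - r i) → e ≤ φ + d →
          ∃ (r' : Fin n → ℤ_[p]) (k' φ' t' : ℕ) (Pk' : MvPolynomial (Fin n) ℤ_[p]),
            Trunk p P r' k' φ' t' Pk' ∧ (∀ i, (p : ℤ_[p]) ^ k' ∣ x₀ i - r' i) ∧ e ≤ φ' := by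
        intro d
        induction d with
        | zero =>
          intro r k φ t Pk hT hc hle
          exact ⟨r, k, φ, t, Pk, hT, hc, by omega⟩
        | succ d ih =>
          intro r k φ t Pk hT hc hle
          by_cases hcase : e ≤ φ
          · exact ⟨r, k, φ, t, Pk, hT, hc, hcase⟩
          · push_neg at hcase
            choose y hy using fun i => hc i
            have hx : ∀ i, x₀ i = r i + (p : ℤ_[p]) ^ k * y i := by
              intro i
              linear_combination hy i
            have heval : eval x₀ P = (p : ℤ_[p]) ^ φ * eval y Pk := by
              rw [← eval_pShift k r y x₀ P hx, hT.invariant]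
              simp
            have hpdvd : (p : ℤ_[p]) ∣ eval y Pk := by
              have h1 : (p : ℤ_[p]) ^ φ * (p : ℤ_[p]) ∣ (p : ℤ_[p]) ^ φ * eval y Pk := by
                rw [← heval, ← pow_succ]
                exact dvd_trans (pow_dvd_pow _ (by omega)) hdvd
              exact (mul_dvd_mul_iff_left (pow_ne_zero φ p_ne_zero')).mp h1
            have hPk0 : Pk ≠ 0 := by
              intro h0
              exact hT.primitive hprim (h0 ▸ dvd_zero _)
            obtain ⟨t', Q, hsQ, hQprim⟩ := exists_primitive_part (pShift_one_ne_zero hPk0)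
            have ht' : 1 ≤ t' := step_t_pos hpdvd hsQ hQprim
            have hT' : Trunk p P (r + (p : ℤ_[p]) ^ k • y) (k + 1) (φ + t') t' Q :=
              Trunk.step y t' Q hT hpdvd hsQ hQprim
            have hc' : ∀ i, (p : ℤ_[p]) ^ (k + 1) ∣ x₀ i - (r + (p : ℤ_[p]) ^ k • y) i := by
              intro i
              have : x₀ i - (r + (p : ℤ_[p]) ^ k • y) i = 0 := by
                simp only [Pi.add_apply, Pi.smul_apply, smul_eq_mul]
                linear_combination hy i
              rw [this]
              exact dvd_zero _
            exact ih _ _ _ _ _ hT' hc' (by omega)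
      apply key e 0 0 0 0 P Trunk.root
      · intro i
        simp
      · omega
    · -- backward direction
      rintro ⟨r, k, φ, t, Pk, hT, hc, hle⟩
      choose y hy using fun i => hc i
      have hx : ∀ i, x₀ i = r i + (p : ℤ_[p]) ^ k * y i := by
        intro i
        linear_combination hy i
      have heval : eval x₀ P = (p : ℤ_[p]) ^ φ * eval y Pk := by
        rw [← eval_pShift k r y x₀ P hx, hT.invariant]
        simp
      rw [heval]
      exact dvd_mul_of_dvd_left (pow_dvd_pow _ hle) _
  · -- uniqueness
    intro r k φ t Pk r' k' φ' t' Pk' hT hT' hc hc' h1 h2 h3 h4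
    have hkk : k = k' := by
      rcases lt_trichotomy k k' with hlt | heq | hgt
      · exfalso
        obtain ⟨r₁, φ₁, t₁, Pk₁, hT₁, hc₁, hle₁⟩ := hT'.ancestor hc' k hlt
        have := hT.phi_eq hprim hT₁ hc hc₁
        omega
      · exact heq
      · exfalso
        obtain ⟨r₁, φ₁, t₁, Pk₁, hT₁, hc₁, hle₁⟩ := hT.ancestor hc k' hgt
        have := hT'.phi_eq hprim hT₁ hc' hc₁
        omega
    subst hkk
    refine ⟨rfl, fun i => ?_⟩
    have := dvd_sub (hc' i) (hc i)
    have h5 : (x₀ i - r' i) - (x₀ i - r i) = r i - r' i := by ring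
    rw [h5] at this
    exact this
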